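/- In the graph H(n,k,m) on vertex set {1,...,n} (edges: all pairs within A = {1,...,m}, and all pairs between C = {1,...,k−m} and B = {m+1,...,n}), the number of copies of K*_{s,t} equals C(k−m, s)·C(n−s, t) + (n−m)·C(k−m, s−1)·C(k−m−s+1, t) + (C(m, s) − C(k−m, s))·C(m−s, t), where ⌈(k+1)/2⌉ ≤ m ≤ k. -/

import Mathlib

open SimpleGraph Finset

/-- `G` contains a linear forest with `k` edges: a subgraph that is acyclic
with maximum degree at most 2 and exactly `k` edges. -/
def containsLinearForest {V : Type*} (G : SimpleGraph V) (k : ℕ) : Prop :=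
  ∃ H : SimpleGraph V, H ≤ G ∧ H.IsAcyclic ∧ (∀ v, (H.neighborSet v).ncard ≤ 2) ∧
    H.edgeSet.ncard = k

/-- `G` contains a matching with `k` edges. -/
def containsMatching {V : Type*} (G : SimpleGraph V) (k : ℕ) : Prop :=
  ∃ H : SimpleGraph V, H ≤ G ∧ (∀ v, (H.neighborSet v).ncard ≤ 1) ∧ H.edgeSet.ncard = k

/-- Number of `s`-cliques (copies of `K_s`) in `G`. -/
noncomputable def cliqueCount {V : Type*} (G : SimpleGraph V) (s : ℕ) : ℕ :=
  {S : Finset V | G.IsNClique s S}.ncard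

/-- Number of copies of `K*_{s,t}` in `G`: pairs `(W₁, W₂)` of disjoint vertex sets with
`|W₁| = s`, `|W₂| = t`, `W₁` a clique and all `W₁`–`W₂` edges present. -/
noncomputable def kstCount {V : Type*} (G : SimpleGraph V) (s t : ℕ) : ℕ :=
  {p : Finset V × Finset V | p.1.card = s ∧ p.2.card = t ∧ Disjoint p.1 p.2 ∧
    G.IsClique (p.1 : Set V) ∧ ∀ a ∈ p.1, ∀ b ∈ p.2, G.Adj a b}.ncard

/-- The graph `H(n,k,m)` on vertex set `Fin n`: all pairs within `A = {0,…,m-1}` together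
with all pairs between `C = {0,…,k-m-1}` and `B = {m,…,n-1}`. -/
def Hgraph (n k m : ℕ) : SimpleGraph (Fin n) where
  Adj a b := a ≠ b ∧ (((a : ℕ) < m ∧ (b : ℕ) < m) ∨
    ((a : ℕ) < k - m ∧ m ≤ (b : ℕ)) ∨ ((b : ℕ) < k - m ∧ m ≤ (a : ℕ)))
  symm := ⟨by rintro a b ⟨h1, h2⟩; exact ⟨h1.symm, by tauto⟩⟩
  loopless := ⟨by rintro a ⟨h1, -⟩; exact h1 rfl⟩

lemma card_filter_coe_lt (n a : ℕ) (h : a ≤ n) :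
    ((univ : Finset (Fin n)).filter fun v : Fin n => (v : ℕ) < a).card = a := by
  rw [← Finset.card_range a]
  apply Finset.card_nbij (fun v : Fin n => (v : ℕ))
  · intro v hv; simp at hv ⊢; omega
  · intro v _ w _ hvw; exact Fin.val_injective hvw
  · intro x hx
    simp only [Finset.coe_range, Set.mem_Iio] at hx
    exact ⟨⟨x, by omega⟩, by simp; omega, rfl⟩

lemma Hgraph_adj {n : ℕ} (k m : ℕ) (a b : Fin n) :
    (Hgraph n k m).Adj a b ↔ a ≠ b ∧ (((a : ℕ) < m ∧ (b : ℕ) < m) ∨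
      ((a : ℕ) < k - m ∧ m ≤ (b : ℕ)) ∨ ((b : ℕ) < k - m ∧ m ≤ (a : ℕ))) := Iff.rfl


set_option maxHeartbeats 1000000 in
/-- The number of copies of `K*_{s,t}` in `H(n,k,m)` for `⌈(k+1)/2⌉ ≤ m ≤ k`
(with `s ≥ 1`, `t ≥ 2`, `n ≥ k+1`). -/
theorem stmt11 (n k m s t : ℕ) (hs : 1 ≤ s) (ht : 2 ≤ t)
    (hm1 : (k + 2) / 2 ≤ m) (hm2 : m ≤ k) (hn : k + 1 ≤ n) :
    kstCount (Hgraph n k m) s t =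
      Nat.choose (k - m) s * Nat.choose (n - s) t +
      (n - m) * Nat.choose (k - m) (s - 1) * Nat.choose (k - m - s + 1) t +
      (Nat.choose m s - Nat.choose (k - m) s) * Nat.choose (m - s) t := by
  classical
  have hk2m : k + 1 ≤ 2 * m := by omega
  have hkmm : k - m < m := by omega
  have hmn : m ≤ n := by omega
  set Cs := (univ : Finset (Fin n)).filter (fun v : Fin n => (v : ℕ) < k - m) with hCsdef
  set As := (univ : Finset (Fin n)).filter (fun v : Fin n => (v : ℕ) < m) with hAsdef
  set Bs := (univ : Finset (Fin n)).filter (fun v : Fin n => m ≤ (v : ℕ)) with hBsdef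
  have memCs : ∀ v : Fin n, v ∈ Cs ↔ (v : ℕ) < k - m := fun v => by simp [hCsdef]
  have memAs : ∀ v : Fin n, v ∈ As ↔ (v : ℕ) < m := fun v => by simp [hAsdef]
  have memBs : ∀ v : Fin n, v ∈ Bs ↔ m ≤ (v : ℕ) := fun v => by simp [hBsdef]
  have hCcard : Cs.card = k - m := card_filter_coe_lt n (k - m) (by omega)
  have hAcard : As.card = m := card_filter_coe_lt n m (by omega)
  have hBcard : Bs.card = n - m := by
    have h1 := Finset.card_filter_add_card_filter_not
      (s := (univ : Finset (Fin n))) (p := fun v : Fin n => (v : ℕ) < m)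
    have h2 : ((univ : Finset (Fin n)).filter fun v : Fin n => ¬ (v : ℕ) < m) = Bs := by
      ext v; simp [hBsdef, not_lt]
    rw [Finset.card_univ, Fintype.card_fin, h2, hAcard] at h1
    omega
  -- adjacency helpers
  have adjC : ∀ a b : Fin n, (a : ℕ) < k - m → a ≠ b → (Hgraph n k m).Adj a b := by
    intro a b ha hab
    refine ⟨hab, ?_⟩
    by_cases hb : (b : ℕ) < m
    · exact Or.inl ⟨by omega, hb⟩
    · exact Or.inr (Or.inl ⟨ha, by omega⟩)
  have adjA : ∀ a b : Fin n, (a : ℕ) < m → (b : ℕ) < m → a ≠ b → (Hgraph n k m).Adj a b :=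
    fun a b ha hb hab => ⟨hab, Or.inl ⟨ha, hb⟩⟩
  have cliqueA : ∀ W : Finset (Fin n), (∀ v ∈ W, (v : ℕ) < m) →
      (Hgraph n k m).IsClique (W : Set (Fin n)) := by
    intro W hW a ha b hb hab
    exact adjA a b (hW a ha) (hW b hb) hab
  -- the counting finset
  set F := (univ : Finset (Finset (Fin n) × Finset (Fin n))).filter (fun p =>
    p.1.card = s ∧ p.2.card = t ∧ Disjoint p.1 p.2 ∧
    (Hgraph n k m).IsClique (p.1 : Set (Fin n)) ∧
    ∀ a ∈ p.1, ∀ b ∈ p.2, (Hgraph n k m).Adj a b) with hFdef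
  have memF : ∀ p : Finset (Fin n) × Finset (Fin n), p ∈ F ↔
      (p.1.card = s ∧ p.2.card = t ∧ Disjoint p.1 p.2 ∧
      (Hgraph n k m).IsClique (p.1 : Set (Fin n)) ∧
      ∀ a ∈ p.1, ∀ b ∈ p.2, (Hgraph n k m).Adj a b) := by
    intro p; rw [hFdef]; simp only [Finset.mem_filter, Finset.mem_univ, true_and]
  have hcount : kstCount (Hgraph n k m) s t = F.card := by
    rw [kstCount, ← Set.ncard_coe_finset]
    congr 1
    ext p
    rw [Set.mem_setOf_eq, Finset.mem_coe, memF]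
  -- class 1 : W₁ ⊆ C
  have hT1 : (F.filter fun p => p.1 ⊆ Cs).card = (k - m).choose s * (n - s).choose t := by
    have hb : ((Cs.powersetCard s).sigma fun W => (univ \ W).powersetCard t).card
        = (F.filter fun p => p.1 ⊆ Cs).card := by
      apply Finset.card_bij (fun σ _ => (σ.1, σ.2))
      · rintro ⟨W1, W2⟩ hσ
        simp only [Finset.mem_sigma, Finset.mem_powersetCard] at hσ
        obtain ⟨⟨hW1C, hW1card⟩, hW2sub, hW2card⟩ := hσ
        have hdisj : Disjoint W1 W2 := by
          rw [Finset.disjoint_left]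
          intro a haW1 haW2
          exact (Finset.mem_sdiff.1 (hW2sub haW2)).2 haW1
        rw [Finset.mem_filter, memF]
        refine ⟨⟨hW1card, hW2card, hdisj, ?_, ?_⟩, hW1C⟩
        · exact cliqueA W1 (fun v hv => by have := (memCs v).1 (hW1C hv); omega)
        · intro a haa b hbb
          exact adjC a b ((memCs a).1 (hW1C haa))
            (fun h => Finset.disjoint_left.1 hdisj haa (h ▸ hbb))
      · rintro ⟨W1, W2⟩ h1 ⟨W1', W2'⟩ h2 h
        simp only [Prod.mk.injEq] at h
        obtain ⟨rfl, rfl⟩ := h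
        rfl
      · rintro ⟨W1, W2⟩ hp
        rw [Finset.mem_filter, memF] at hp
        obtain ⟨⟨hc1, hc2, hdisj, -, -⟩, hsub⟩ := hp
        refine ⟨⟨W1, W2⟩, ?_, rfl⟩
        simp only [Finset.mem_sigma, Finset.mem_powersetCard]
        exact ⟨⟨hsub, hc1⟩, fun a ha => Finset.mem_sdiff.2
          ⟨Finset.mem_univ a, fun h => Finset.disjoint_left.1 hdisj h ha⟩, hc2⟩
    rw [← hb, Finset.card_sigma]
    have hconst : ∀ W ∈ Cs.powersetCard s, ((univ \ W).powersetCard t).card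
        = (n - s).choose t := by
      intro W hW
      rw [Finset.card_powersetCard, Finset.card_sdiff_of_subset (Finset.subset_univ W),
        Finset.card_univ, Fintype.card_fin, (Finset.mem_powersetCard.1 hW).2]
    rw [Finset.sum_congr rfl hconst, Finset.sum_const, Finset.card_powersetCard, hCcard,
      smul_eq_mul]
  -- class 2 : W₁ contains a vertex of B
  have hT2 : ((F.filter fun p => ¬ p.1 ⊆ Cs).filter fun p => ∃ b ∈ p.1, m ≤ Fin.val b).card
      = (n - m) * (k - m).choose (s - 1) * ((k - m) - (s - 1)).choose t := by
    have hb : (((Bs ×ˢ Cs.powersetCard (s - 1)).sigma fun q =>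
        (Cs \ q.2).powersetCard t).card)
        = ((F.filter fun p => ¬ p.1 ⊆ Cs).filter fun p => ∃ b ∈ p.1, m ≤ Fin.val b).card := by
      apply Finset.card_bij (fun σ _ => (insert σ.1.1 σ.1.2, σ.2))
      · rintro ⟨⟨b, W'⟩, W2⟩ hσ
        simp only [Finset.mem_sigma, Finset.mem_product, Finset.mem_powersetCard] at hσ
        obtain ⟨⟨hbB, hW'C, hW'card⟩, hW2sub, hW2card⟩ := hσ
        rw [memBs] at hbB
        have hW'lt : ∀ w ∈ W', (w : ℕ) < k - m := fun w hw => (memCs w).1 (hW'C hw)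
        have hW2lt : ∀ w ∈ W2, (w : ℕ) < k - m ∧ w ∉ W' := by
          intro w hw
          have := Finset.mem_sdiff.1 (hW2sub hw)
          exact ⟨(memCs w).1 this.1, this.2⟩
        have hbW' : b ∉ W' := fun h => by have := hW'lt b h; omega
        rw [Finset.mem_filter, Finset.mem_filter, memF]
        refine ⟨⟨⟨?_, hW2card, ?_, ?_, ?_⟩, ?_⟩, ⟨b, Finset.mem_insert_self _ _, hbB⟩⟩
        · rw [Finset.card_insert_of_notMem hbW', hW'card]; omega
        · rw [Finset.disjoint_left]
          intro a ha haW2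
          obtain ⟨haw, hanW'⟩ := hW2lt a haW2
          rcases Finset.mem_insert.1 ha with rfl | h
          · omega
          · exact hanW' h
        · intro a ha c hc hne
          rcases Finset.mem_insert.1 (Finset.mem_coe.1 ha) with rfl | haW'
          · rcases Finset.mem_insert.1 (Finset.mem_coe.1 hc) with rfl | hcW'
            · exact absurd rfl hne
            · exact (adjC c a (hW'lt c hcW') hne.symm).symm
          · exact adjC a c (hW'lt a haW') hne
        · intro a ha d hd
          obtain ⟨hdlt, hdnW'⟩ := hW2lt d hd
          rcases Finset.mem_insert.1 ha with rfl | haW'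
          · exact (adjC d a hdlt (fun h => by rw [h] at hdlt; omega)).symm
          · exact adjC a d (hW'lt a haW') (fun h => hdnW' (h ▸ haW'))
        · intro hsub
          have := (memCs b).1 (hsub (Finset.mem_insert_self _ _))
          omega
      · rintro ⟨⟨b, W'⟩, W2⟩ h1 ⟨⟨b', W''⟩, W2'⟩ h2 h
        simp only [Finset.mem_sigma, Finset.mem_product, Finset.mem_powersetCard] at h1 h2
        simp only [Prod.mk.injEq] at h
        obtain ⟨hins, rfl⟩ := h
        have hbB := (memBs b).1 h1.1.1
        have hb'B := (memBs b').1 h2.1.1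
        have hbb' : b = b' := by
          have : b ∈ insert b' W'' := hins ▸ Finset.mem_insert_self b W'
          rcases Finset.mem_insert.1 this with h | h
          · exact h
          · have := (memCs b).1 (h2.1.2.1 h); omega
        subst hbb'
        have hbW' : b ∉ W' := fun h => by have := (memCs b).1 (h1.1.2.1 h); omega
        have hbW'' : b ∉ W'' := fun h => by have := (memCs b).1 (h2.1.2.1 h); omega
        have hWW : W' = W'' := by
          rw [← Finset.erase_insert hbW', ← Finset.erase_insert hbW'', hins]
        subst hWW
        rfl
      · rintro ⟨W1, W2⟩ hp
        rw [Finset.mem_filter, Finset.mem_filter, memF] at hp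
        obtain ⟨⟨⟨hc1, hc2, hdisj, hclique, hcross⟩, -⟩, b0, hb0mem, hb0⟩ := hp
        have hsmall : ∀ a ∈ W1, a ≠ b0 → (a : ℕ) < k - m := by
          intro a ha hne
          have hadj := hclique (Finset.mem_coe.2 ha) (Finset.mem_coe.2 hb0mem) hne
          rw [Hgraph_adj] at hadj
          omega
        refine ⟨⟨⟨b0, W1.erase b0⟩, W2⟩, ?_, ?_⟩
        · simp only [Finset.mem_sigma, Finset.mem_product, Finset.mem_powersetCard]
          refine ⟨⟨(memBs b0).2 hb0, ?_, ?_⟩, ?_, hc2⟩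
          · intro a ha
            exact (memCs a).2 (hsmall a (Finset.mem_of_mem_erase ha)
              (Finset.ne_of_mem_erase ha))
          · rw [Finset.card_erase_of_mem hb0mem, hc1]
          · intro d hd
            have hadj := hcross b0 hb0mem d hd
            rw [Hgraph_adj] at hadj
            refine Finset.mem_sdiff.2 ⟨(memCs d).2 (by omega), fun h =>
              Finset.disjoint_left.1 hdisj (Finset.mem_of_mem_erase h) hd⟩
        · simp only
          rw [Finset.insert_erase hb0mem]
    rw [← hb, Finset.card_sigma]
    have hconst : ∀ q ∈ Bs ×ˢ Cs.powersetCard (s - 1),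
        ((Cs \ q.2).powersetCard t).card = ((k - m) - (s - 1)).choose t := by
      intro q hq
      obtain ⟨-, hq2⟩ := Finset.mem_product.1 hq
      obtain ⟨hsub, hcard⟩ := Finset.mem_powersetCard.1 hq2
      rw [Finset.card_powersetCard, Finset.card_sdiff_of_subset hsub, hCcard, hcard]
    rw [Finset.sum_congr rfl hconst, Finset.sum_const, Finset.card_product,
      Finset.card_powersetCard, hCcard, hBcard, smul_eq_mul, mul_assoc]
  -- class 3 : W₁ ⊆ A, W₁ ⊄ C, no vertex of B
  have hT3 : ((F.filter fun p => ¬ p.1 ⊆ Cs).filter fun p => ¬ ∃ b ∈ p.1, m ≤ Fin.val b).card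
      = (m.choose s - (k - m).choose s) * (m - s).choose t := by
    have hb : (((As.powersetCard s \ Cs.powersetCard s).sigma fun W =>
        (As \ W).powersetCard t).card)
        = ((F.filter fun p => ¬ p.1 ⊆ Cs).filter fun p => ¬ ∃ b ∈ p.1, m ≤ Fin.val b).card := by
      apply Finset.card_bij (fun σ _ => (σ.1, σ.2))
      · rintro ⟨W1, W2⟩ hσ
        simp only [Finset.mem_sigma, Finset.mem_sdiff, Finset.mem_powersetCard] at hσ
        obtain ⟨⟨⟨hW1A, hW1card⟩, hW1nC⟩, hW2sub, hW2card⟩ := hσ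
        have hW1lt : ∀ w ∈ W1, (w : ℕ) < m := fun w hw => (memAs w).1 (hW1A hw)
        have hW2m : ∀ w ∈ W2, (w : ℕ) < m ∧ w ∉ W1 := by
          intro w hw
          have := Finset.mem_sdiff.1 (hW2sub hw)
          exact ⟨(memAs w).1 this.1, this.2⟩
        have hdisj : Disjoint W1 W2 := by
          rw [Finset.disjoint_left]
          intro a haW1 haW2
          exact (hW2m a haW2).2 haW1
        rw [Finset.mem_filter, Finset.mem_filter, memF]
        refine ⟨⟨⟨hW1card, hW2card, hdisj, cliqueA W1 hW1lt, ?_⟩, ?_⟩, ?_⟩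
        · intro a ha d hd
          exact adjA a d (hW1lt a ha) ((hW2m d hd).1)
            (fun h => (hW2m d hd).2 (h ▸ ha))
        · intro hsub
          exact hW1nC ⟨hsub, hW1card⟩
        · push_neg
          intro b hbW1
          have := hW1lt b hbW1
          omega
      · rintro ⟨W1, W2⟩ h1 ⟨W1', W2'⟩ h2 h
        simp only [Prod.mk.injEq] at h
        obtain ⟨rfl, rfl⟩ := h
        rfl
      · rintro ⟨W1, W2⟩ hp
        rw [Finset.mem_filter, Finset.mem_filter, memF] at hp
        obtain ⟨⟨⟨hc1, hc2, hdisj, hclique, hcross⟩, hnC⟩, hnB⟩ := hp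
        push_neg at hnB
        have hW1lt : ∀ w ∈ W1, (w : ℕ) < m := fun w hw => by
          have := hnB w hw; omega
        obtain ⟨a0, ha0mem, ha0nC⟩ := Finset.not_subset.1 hnC
        rw [memCs] at ha0nC
        refine ⟨⟨W1, W2⟩, ?_, rfl⟩
        simp only [Finset.mem_sigma, Finset.mem_sdiff, Finset.mem_powersetCard]
        refine ⟨⟨⟨fun w hw => (memAs w).2 (hW1lt w hw), hc1⟩, fun h => hnC h.1⟩, ?_, hc2⟩
        intro d hd
        have hdm : (d : ℕ) < m := by
          have hadj := hcross a0 ha0mem d hd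
          rw [Hgraph_adj] at hadj
          have := hW1lt a0 ha0mem
          omega
        exact Finset.mem_sdiff.2 ⟨(memAs d).2 hdm,
          fun h => Finset.disjoint_left.1 hdisj h hd⟩
    rw [← hb, Finset.card_sigma]
    have hconst : ∀ W ∈ As.powersetCard s \ Cs.powersetCard s,
        ((As \ W).powersetCard t).card = (m - s).choose t := by
      intro W hW
      obtain ⟨hWA, -⟩ := Finset.mem_sdiff.1 hW
      obtain ⟨hsub, hcard⟩ := Finset.mem_powersetCard.1 hWA
      rw [Finset.card_powersetCard, Finset.card_sdiff_of_subset hsub, hAcard, hcard]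
    have hCsubA : Cs ⊆ As := by
      intro v hv
      rw [memCs] at hv
      exact (memAs v).2 (by omega)
    rw [Finset.sum_congr rfl hconst, Finset.sum_const,
      Finset.card_sdiff_of_subset (Finset.powersetCard_mono hCsubA),
      Finset.card_powersetCard, Finset.card_powersetCard, hAcard, hCcard, smul_eq_mul]
  -- assemble
  have hsplit1 : F.card = (F.filter fun p => p.1 ⊆ Cs).card
      + (F.filter fun p => ¬ p.1 ⊆ Cs).card :=
    (Finset.card_filter_add_card_filter_not (s := F) (fun p => p.1 ⊆ Cs)).symm
  have hsplit2 : (F.filter fun p => ¬ p.1 ⊆ Cs).card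
      = ((F.filter fun p => ¬ p.1 ⊆ Cs).filter fun p => ∃ b ∈ p.1, m ≤ Fin.val b).card
      + ((F.filter fun p => ¬ p.1 ⊆ Cs).filter fun p => ¬ ∃ b ∈ p.1, m ≤ Fin.val b).card :=
    (Finset.card_filter_add_card_filter_not (s := F.filter fun p => ¬ p.1 ⊆ Cs) (fun p => ∃ b ∈ p.1, m ≤ Fin.val b)).symm
  have hfix : (n - m) * (k - m).choose (s - 1) * ((k - m) - (s - 1)).choose t
      = (n - m) * (k - m).choose (s - 1) * (k - m - s + 1).choose t := by
    by_cases h1 : s ≤ k - m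
    · have : (k - m) - (s - 1) = k - m - s + 1 := by omega
      rw [this]
    · rw [Nat.choose_eq_zero_of_lt (by omega : (k - m) - (s - 1) < t),
        Nat.choose_eq_zero_of_lt (by omega : k - m - s + 1 < t)]
  rw [hcount, hsplit1, hsplit2, hT1, hT2, hT3, hfix]
  omega
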